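/- Let N, d, m be natural numbers, let Ω be a real N×d matrix, Z a real N×m matrix, and y ∈ ℝ^N. Define M = I_m + Zᵀ Z, B = Ωᵀ Z, H = I_d + Ωᵀ Ω − B M⁻¹ Bᵀ, and u = Ωᵀ y − B M⁻¹ Zᵀ y. Then M and H are positive definite (hence invertible), and the vectors θ̂ = H⁻¹ u and β̂ = M⁻¹ (Zᵀ y − Bᵀ θ̂) satisfy (I_{d+m} + Φᵀ Φ) · (θ̂, β̂) = Φᵀ y, where Φ is the N×(d+m) matrix whose first d columns are Ω and whose last m columns are Z; equivalently, (θ̂, β̂) is the ridge-regression estimator (I_{d+m} + Φᵀ Φ)⁻¹ Φᵀ y. -/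

import Mathlib

open Matrix

/-- Block-matrix (Schur complement) identity underlying the parameter estimates of
`CascadeHybrid`: the hybrid estimator `θ̂ = H⁻¹ u`, `β̂ = M⁻¹ (Zᵀy − Bᵀθ̂)` coincides with
the joint ridge-regression solution on the stacked feature matrix `Φ = [Ω Z]`. -/
theorem stmt0 (N d m : ℕ) (Ω : Matrix (Fin N) (Fin d) ℝ) (Z : Matrix (Fin N) (Fin m) ℝ)
    (y : Fin N → ℝ)
    (M : Matrix (Fin m) (Fin m) ℝ) (hM : M = 1 + Zᵀ * Z)
    (B : Matrix (Fin d) (Fin m) ℝ) (hB : B = Ωᵀ * Z)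
    (H : Matrix (Fin d) (Fin d) ℝ) (hH : H = 1 + Ωᵀ * Ω - B * M⁻¹ * Bᵀ)
    (u : Fin d → ℝ) (hu : u = Ωᵀ *ᵥ y - B *ᵥ (M⁻¹ *ᵥ (Zᵀ *ᵥ y)))
    (θ : Fin d → ℝ) (hθ : θ = H⁻¹ *ᵥ u)
    (β : Fin m → ℝ) (hβ : β = M⁻¹ *ᵥ (Zᵀ *ᵥ y - Bᵀ *ᵥ θ))
    (Φ : Matrix (Fin N) (Fin d ⊕ Fin m) ℝ) (hΦ : Φ = fromCols Ω Z) :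
    M.PosDef ∧ H.PosDef ∧
      (1 + Φᵀ * Φ) *ᵥ (Sum.elim θ β) = Φᵀ *ᵥ y ∧
      Sum.elim θ β = (1 + Φᵀ * Φ)⁻¹ *ᵥ (Φᵀ *ᵥ y) := by
  have hZt : Zᴴ = Zᵀ := by ext i j; simp [conjTranspose_apply]
  have hMpd : M.PosDef := by
    rw [hM]
    exact Matrix.PosDef.add_posSemidef Matrix.PosDef.one
      (hZt ▸ posSemidef_conjTranspose_mul_self Z)
  have hApd : (1 + Φᵀ * Φ).PosDef := by
    have hΦt : Φᴴ = Φᵀ := by ext i j; simp [conjTranspose_apply]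
    exact Matrix.PosDef.add_posSemidef Matrix.PosDef.one
      (hΦt ▸ posSemidef_conjTranspose_mul_self Φ)
  haveI : Invertible M := hMpd.isUnit.invertible
  have hBt : Bᴴ = Bᵀ := by ext i j; simp [conjTranspose_apply]
  have hblock : 1 + Φᵀ * Φ = fromBlocks (1 + Ωᵀ * Ω) B Bᵀ M := by
    rw [hΦ, transpose_fromCols, fromRows_mul_fromCols, hM, hB,
      ← fromBlocks_one, fromBlocks_add, transpose_mul, transpose_transpose,
      zero_add, zero_add]
  have hblockpd := hApd
  rw [hblock] at hblockpd
  -- H posdef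
  have hHpd : H.PosDef := by
    refine Matrix.PosDef.of_dotProduct_mulVec_pos ?_ ?_
    · have := hblockpd.isHermitian
      rw [← hBt, IsHermitian.fromBlocks₂₂ _ _ hMpd.isHermitian] at this
      rw [hH, ← hBt]; exact this
    · intro x hx
      have hv : (x ⊕ᵥ -((M⁻¹ * Bᴴ) *ᵥ x)) ≠ 0 := by
        intro h
        exact hx (funext fun i => by simpa using congrFun h (Sum.inl i))
      have := hblockpd.dotProduct_mulVec_pos hv
      rw [← hBt, dotProduct_mulVec,
        schur_complement_eq₂₂ (1 + Ωᵀ * Ω) B x _ hMpd.isHermitian] at this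
      simp only [add_neg_cancel, star_zero, zero_vecMul, zero_dotProduct, zero_add] at this
      rw [hH, ← hBt, dotProduct_mulVec]
      exact this
  haveI : Invertible H := hHpd.isUnit.invertible
  have hkey : (1 + Φᵀ * Φ) *ᵥ (Sum.elim θ β) = Φᵀ *ᵥ y := by
    have hMβ : M *ᵥ β = Zᵀ *ᵥ y - Bᵀ *ᵥ θ := by
      rw [hβ, mulVec_mulVec, Matrix.mul_inv_of_invertible, one_mulVec]
    have hHθ : H *ᵥ θ = u := by
      rw [hθ, mulVec_mulVec, Matrix.mul_inv_of_invertible, one_mulVec]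
    rw [hblock, hΦ, transpose_fromCols, fromRows_mulVec, fromBlocks_mulVec]
    simp only [Sum.elim_comp_inl, Sum.elim_comp_inr]
    refine congrArg₂ Sum.elim ?_ ?_
    · have h1 : (1 + Ωᵀ * Ω) *ᵥ θ = H *ᵥ θ + (B * M⁻¹ * Bᵀ) *ᵥ θ := by
        rw [hH, sub_mulVec]; abel
      rw [h1, hHθ, hβ, hu]
      simp only [mulVec_sub, mulVec_mulVec, Matrix.mul_assoc]
      abel
    · rw [hMβ]; abel
  refine ⟨hMpd, hHpd, hkey, ?_⟩
  haveI : Invertible (1 + Φᵀ * Φ) := hApd.isUnit.invertible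
  rw [← hkey, mulVec_mulVec, Matrix.inv_mul_of_invertible, one_mulVec]
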